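/- For a constant matrix A and b(τ) = ∑_{j=0}^{p−1} (τ^j/j!) b_{j+1} a vector polynomial, the exact solution of f' = A f + b satisfies f(τ_n+Δτ) = φ₀(Δτ A) f(τ_n) + ∑_{j=0}^{p−1} ∑_{l=0}^{j} (τ_n^{j−l}/(j−l)!) Δτ^{l+1} φ_{l+1}(Δτ A) b_{j+1}, where φ_l are the matrix φ-functions φ_l(M) = ∑_{k≥0} M^k/(k+l)!. -/

import Mathlib

/-- Matrix φ-function: φ_l(M) = ∑_{k≥0} M^k/(k+l)!. -/
noncomputable def phiMat (N : ℕ) (l : ℕ) (M : Matrix (Fin N) (Fin N) ℝ) :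
    Matrix (Fin N) (Fin N) ℝ :=
  ∑' k : ℕ, (1 / (Nat.factorial (k + l) : ℝ)) • M ^ k

noncomputable section
namespace PhiAux


attribute [local instance] Matrix.linftyOpNormedAddCommGroup Matrix.linftyOpNormedSpace
  Matrix.linftyOpNormedRing Matrix.linftyOpNormedAlgebra

variable {N : ℕ} (A : Matrix (Fin N) (Fin N) ℝ)

lemma norm_pow_le_aux (k : ℕ) : ‖A ^ k‖ ≤ max ‖(1 : Matrix (Fin N) (Fin N) ℝ)‖ 1 * ‖A‖ ^ k := by
  cases k with
  | zero => rw [pow_zero, pow_zero, mul_one]; exact le_max_left _ _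
  | succ k =>
    calc ‖A ^ (k+1)‖ ≤ ‖A‖ ^ (k+1) := norm_pow_le' A k.succ_pos
    _ ≤ max ‖(1 : Matrix (Fin N) (Fin N) ℝ)‖ 1 * ‖A‖ ^ (k+1) :=
        le_mul_of_one_le_left (by positivity) (le_max_right _ _)

lemma summable_phi_series (l : ℕ) (t : ℝ) :
    Summable fun k : ℕ => (t ^ k / (Nat.factorial (k + l) : ℝ)) • A ^ k := by
  set b1 := max ‖(1 : Matrix (Fin N) (Fin N) ℝ)‖ 1 with hb1
  have hb1' : (0:ℝ) ≤ b1 := le_trans zero_le_one (le_max_right _ _)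
  apply Summable.of_norm_bounded (g := fun k => b1 * ((|t| * ‖A‖) ^ k / (Nat.factorial k : ℝ)))
  · exact (Real.summable_pow_div_factorial (|t| * ‖A‖)).mul_left b1
  · intro k
    rw [norm_smul, Real.norm_eq_abs]
    have h1 : |t ^ k / (Nat.factorial (k + l) : ℝ)| ≤ |t| ^ k / (Nat.factorial k : ℝ) := by
      rw [abs_div, abs_pow, Nat.abs_cast]
      apply div_le_div_of_nonneg_left (by positivity) (by positivity)
      exact_mod_cast Nat.factorial_le (Nat.le_add_right k l)
    calc |t ^ k / (Nat.factorial (k + l) : ℝ)| * ‖A ^ k‖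
        ≤ (|t| ^ k / (Nat.factorial k : ℝ)) * (b1 * ‖A‖ ^ k) := by
          apply mul_le_mul h1 (norm_pow_le_aux A k) (norm_nonneg _) (by positivity)
      _ = b1 * ((|t| * ‖A‖) ^ k / (Nat.factorial k : ℝ)) := by rw [mul_pow]; ring

/-- ψ_l(t) = ∑_k t^{k+l} A^k/(k+l)! -/
def psiM (l : ℕ) (t : ℝ) : Matrix (Fin N) (Fin N) ℝ :=
  ∑' k : ℕ, (t ^ (k + l) / (Nat.factorial (k + l) : ℝ)) • A ^ k

lemma psi_term_eq (l : ℕ) (t : ℝ) (k : ℕ) :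
    (t ^ (k + l) / (Nat.factorial (k + l) : ℝ)) • A ^ k
      = t ^ l • ((t ^ k / (Nat.factorial (k + l) : ℝ)) • A ^ k) := by
  rw [smul_smul, pow_add]; ring_nf

lemma summable_psi_series (l : ℕ) (t : ℝ) :
    Summable fun k : ℕ => (t ^ (k + l) / (Nat.factorial (k + l) : ℝ)) • A ^ k := by
  have := (summable_phi_series A l t).const_smul (t ^ l)
  apply this.congr
  intro k
  exact (psi_term_eq A l t k).symm

lemma psiM_eq_smul_phi (l : ℕ) (t : ℝ) :
    psiM A l t = t ^ l • (∑' k : ℕ, (t ^ k / (Nat.factorial (k + l) : ℝ)) • A ^ k) := by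
  rw [psiM, ← (summable_phi_series A l t).tsum_const_smul (t ^ l)]
  exact tsum_congr (psi_term_eq A l t)

/-- left-multiplication by A as a CLM -/
def mulLeftCLM : Matrix (Fin N) (Fin N) ℝ →L[ℝ] Matrix (Fin N) (Fin N) ℝ :=
  LinearMap.toContinuousLinearMap (LinearMap.mulLeft ℝ A)

@[simp] lemma mulLeftCLM_apply (M : Matrix (Fin N) (Fin N) ℝ) : mulLeftCLM A M = A * M := rfl

lemma psiM_succ (l : ℕ) (t : ℝ) :
    psiM A l t = (t ^ l / (Nat.factorial l : ℝ)) • 1 + A * psiM A (l + 1) t := by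
  rw [psiM, (summable_psi_series A l t).tsum_eq_zero_add]
  congr 1
  · simp
  · rw [psiM, ← mulLeftCLM_apply, ContinuousLinearMap.map_tsum _ (summable_psi_series A (l+1) t)]
    apply tsum_congr
    intro k
    have hkl : k + 1 + l = k + (l + 1) := by omega
    rw [mulLeftCLM_apply, mul_smul_comm, ← pow_succ', hkl]

lemma hasDerivAt_psiM (l : ℕ) (t : ℝ) :
    HasDerivAt (fun s => psiM A (l + 1) s) (psiM A l t) t := by
  set R := |t| + 1 with hRdef
  have hR : |t| < R := lt_add_one _
  have hR0 : (0:ℝ) < R := lt_of_le_of_lt (abs_nonneg t) hR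
  set b1 := max ‖(1 : Matrix (Fin N) (Fin N) ℝ)‖ 1 with hb1def
  have hb1 : (1:ℝ) ≤ b1 := le_max_right _ _
  have hb1' : (0:ℝ) ≤ b1 := zero_le_one.trans hb1
  have key := hasDerivAt_tsum_of_isPreconnected
    (u := fun k => b1 * (R ^ l * ((R * ‖A‖) ^ k / (Nat.factorial k : ℝ))))
    (g := fun k s => (s ^ (k + (l+1)) / (Nat.factorial (k + (l+1)) : ℝ)) • A ^ k)
    (g' := fun k s => (s ^ (k + l) / (Nat.factorial (k + l) : ℝ)) • A ^ k)
    (t := Metric.ball (0:ℝ) R) (y₀ := t) (y := t)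
    ?_ Metric.isOpen_ball ?_ ?_ ?_ ?_ ?_ ?_
  · exact key
  · exact (((Real.summable_pow_div_factorial (R * ‖A‖)).mul_left (R ^ l)).mul_left b1)
  · exact (convex_ball (0:ℝ) R).isPreconnected
  · intro k y _
    have hkl : k + (l + 1) = (k + l) + 1 := by omega
    simp only [hkl]
    have h := ((hasDerivAt_pow ((k+l)+1) y).div_const
      ((Nat.factorial ((k+l)+1) : ℝ))).smul_const (A ^ k)
    have hsc : ((((k+l)+1 : ℕ) : ℝ) * y ^ ((k+l) + 1 - 1)) / ((Nat.factorial ((k+l)+1) : ℝ))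
        = y ^ (k+l) / (Nat.factorial (k+l) : ℝ) := by
      rw [Nat.add_sub_cancel, Nat.factorial_succ]
      have h1 : ((Nat.factorial (k+l) : ℝ)) ≠ 0 := Nat.cast_ne_zero.mpr (Nat.factorial_ne_zero _)
      have h2 : (((k+l)+1 : ℕ) : ℝ) ≠ 0 := Nat.cast_ne_zero.mpr (Nat.succ_ne_zero _)
      push_cast at h1 h2 ⊢
      field_simp
    rw [hsc] at h
    exact h
  · intro k y hy
    have hyR : |y| ≤ R := by
      have := Metric.mem_ball.mp hy
      rw [Real.dist_eq, sub_zero] at this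
      exact this.le
    rw [norm_smul, Real.norm_eq_abs]
    have h1 : |y ^ (k + l) / (Nat.factorial (k + l) : ℝ)|
        ≤ R ^ l * R ^ k / (Nat.factorial k : ℝ) := by
      rw [abs_div, abs_pow, Nat.abs_cast]
      have : |y| ^ (k + l) ≤ R ^ l * R ^ k := by
        rw [← pow_add, add_comm l k]
        exact pow_le_pow_left₀ (abs_nonneg y) hyR _
      apply div_le_div₀ (by positivity) this (by positivity)
      exact_mod_cast Nat.factorial_le (Nat.le_add_right k l)
    calc |y ^ (k + l) / (Nat.factorial (k + l) : ℝ)| * ‖A ^ k‖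
        ≤ (R ^ l * R ^ k / (Nat.factorial k : ℝ)) * (b1 * ‖A‖ ^ k) :=
          mul_le_mul h1 (norm_pow_le_aux A k) (norm_nonneg _) (by positivity)
      _ = b1 * (R ^ l * ((R * ‖A‖) ^ k / (Nat.factorial k : ℝ))) := by rw [mul_pow]; ring
  · exact Metric.mem_ball.mpr (by rw [Real.dist_eq, sub_zero]; exact hR)
  · exact summable_psi_series A (l+1) t
  · exact Metric.mem_ball.mpr (by rw [Real.dist_eq, sub_zero]; exact hR)

lemma hasDerivAt_psiM_zero (t : ℝ) :
    HasDerivAt (fun s => psiM A 0 s) (A * psiM A 0 t) t := by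
  have hfun : (fun s => psiM A 0 s) = fun s => (1 : Matrix (Fin N) (Fin N) ℝ) + A * psiM A 1 s := by
    funext s
    rw [psiM_succ A 0 s]
    simp
  rw [hfun]
  have h := (mulLeftCLM A).hasFDerivAt.comp_hasDerivAt t (hasDerivAt_psiM A 0 t)
  exact h.const_add _

lemma psiM_succ_at_zero (l : ℕ) : psiM A (l+1) 0 = 0 := by
  rw [psiM]
  convert tsum_zero with k
  rw [zero_pow (by omega), zero_div, zero_smul]

lemma psiM_zero_at_zero : psiM A 0 0 = 1 := by
  rw [psiM_succ A 0 0, psiM_succ_at_zero A 0]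
  simp

/-- `M ↦ M.mulVec v` as a CLM. -/
def mulVecCLM (v : Fin N → ℝ) : Matrix (Fin N) (Fin N) ℝ →L[ℝ] (Fin N → ℝ) :=
  LinearMap.toContinuousLinearMap
    { toFun := fun M => M.mulVec v
      map_add' := fun M M' => Matrix.add_mulVec M M' v
      map_smul' := fun c M => Matrix.smul_mulVec c M v }

@[simp] lemma mulVecCLM_apply (v : Fin N → ℝ) (M : Matrix (Fin N) (Fin N) ℝ) :
    mulVecCLM v M = M.mulVec v := rfl

lemma hasDerivAt_psiVec (l : ℕ) (t : ℝ) (v : Fin N → ℝ) :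
    HasDerivAt (fun s => (psiM A (l+1) s).mulVec v) ((psiM A l t).mulVec v) t :=
  (mulVecCLM v).hasFDerivAt.comp_hasDerivAt t (hasDerivAt_psiM A l t)

lemma hasDerivAt_psiVec_zero (t : ℝ) (v : Fin N → ℝ) :
    HasDerivAt (fun s => (psiM A 0 s).mulVec v) (A.mulVec ((psiM A 0 t).mulVec v)) t := by
  have h := (mulVecCLM v).hasFDerivAt.comp_hasDerivAt t (hasDerivAt_psiM_zero A t)
  rw [Matrix.mulVec_mulVec]
  exact h

lemma binom_sum (x y : ℝ) (j : ℕ) :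
    ∑ l ∈ Finset.range (j+1),
        (x ^ (j - l) / (Nat.factorial (j-l) : ℝ)) * (y ^ l / (Nat.factorial l : ℝ))
      = (x + y) ^ j / (Nat.factorial j : ℝ) := by
  rw [add_comm x y, add_pow, Finset.sum_div]
  apply Finset.sum_congr rfl
  intro l hl
  have hlj : l ≤ j := Nat.lt_succ_iff.mp (Finset.mem_range.mp hl)
  have key : ((j.choose l : ℕ) : ℝ) * (Nat.factorial l : ℝ) * (Nat.factorial (j - l) : ℝ)
      = (Nat.factorial j : ℝ) := by
    exact_mod_cast congrArg (Nat.cast : ℕ → ℝ) (Nat.choose_mul_factorial_mul_factorial hlj)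
  have h1 : (Nat.factorial l : ℝ) ≠ 0 := Nat.cast_ne_zero.mpr (Nat.factorial_ne_zero _)
  have h2 : (Nat.factorial (j-l) : ℝ) ≠ 0 := Nat.cast_ne_zero.mpr (Nat.factorial_ne_zero _)
  have h3 : (Nat.factorial j : ℝ) ≠ 0 := Nat.cast_ne_zero.mpr (Nat.factorial_ne_zero _)
  rw [div_mul_div_comm, div_eq_div_iff (by exact mul_ne_zero h2 h1) h3]
  linear_combination (-(x ^ (j-l) * y ^ l)) * key

end PhiAux

open PhiAux in
lemma psiM_eq_phiMat {N : ℕ} (A : Matrix (Fin N) (Fin N) ℝ) (l : ℕ) (t : ℝ) :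
    psiM A l t = t ^ l • phiMat N l (t • A) := by
  rw [psiM_eq_smul_phi]
  congr 1
  rw [phiMat]
  apply tsum_congr
  intro k
  rw [smul_pow, smul_smul]
  congr 1
  ring

end

/-- Exact exponential-integrator representation of the solution of
f' = A f + b with polynomial b(τ) = ∑_{j=0}^{p-1} τ^j b_{j+1}/j!. -/
theorem exponential_integrator_polynomial (N p : ℕ) (hp : 0 < p)
    (A : Matrix (Fin N) (Fin N) ℝ) (bcoef : ℕ → Fin N → ℝ)
    (b : ℝ → Fin N → ℝ)
    (hb : ∀ τ, b τ = ∑ j ∈ Finset.range p,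
      (τ ^ j / (Nat.factorial j : ℝ)) • bcoef (j + 1))
    (f : ℝ → Fin N → ℝ)
    (hf : ∀ τ, HasDerivAt f (A.mulVec (f τ) + b τ) τ)
    (τn Δτ : ℝ) (hτn : 0 ≤ τn) (hΔτ : 0 < Δτ) :
    f (τn + Δτ)
      = (phiMat N 0 (Δτ • A)).mulVec (f τn)
        + ∑ j ∈ Finset.range p, ∑ l ∈ Finset.range (j + 1),
            (τn ^ (j - l) / (Nat.factorial (j - l) : ℝ) * Δτ ^ (l + 1)) •
              (phiMat N (l + 1) (Δτ • A)).mulVec (bcoef (j + 1)) := by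
  classical
  set T : (Fin N → ℝ) →L[ℝ] (Fin N → ℝ) :=
    LinearMap.toContinuousLinearMap (Matrix.mulVecLin A) with hT
  set v : ℝ → (Fin N → ℝ) → (Fin N → ℝ) := fun s y => A.mulVec y + b (τn + s) with hv
  have hlip : ∀ s, LipschitzWith ‖T‖₊ (v s) := by
    intro s
    apply LipschitzWith.of_dist_le_mul
    intro y z
    have : dist (v s y) (v s z) = dist (A.mulVec y) (A.mulVec z) := by
      simp only [hv, dist_add_right]
    rw [this]
    have := T.lipschitz.dist_le_mul y z
    simpa [hT] using this
  set g : ℝ → Fin N → ℝ := fun s =>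
    (PhiAux.psiM A 0 s).mulVec (f τn)
      + ∑ j ∈ Finset.range p, ∑ l ∈ Finset.range (j + 1),
          (τn ^ (j - l) / (Nat.factorial (j - l) : ℝ)) •
            (PhiAux.psiM A (l + 1) s).mulVec (bcoef (j + 1)) with hg
  -- A.mulVec commutes with finite sums
  have mulVec_sum : ∀ {ι : Type} (sset : Finset ι) (F : ι → Fin N → ℝ),
      A.mulVec (∑ i ∈ sset, F i) = ∑ i ∈ sset, A.mulVec (F i) := by
    intro ι sset F
    exact map_sum (Matrix.mulVecLin A) F sset
  have hgd : ∀ s, HasDerivAt g (v s (g s)) s := by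
    intro s
    have hd : HasDerivAt g
        (A.mulVec ((PhiAux.psiM A 0 s).mulVec (f τn))
          + ∑ j ∈ Finset.range p, ∑ l ∈ Finset.range (j + 1),
              (τn ^ (j - l) / (Nat.factorial (j - l) : ℝ)) •
                (PhiAux.psiM A l s).mulVec (bcoef (j + 1))) s := by
      apply HasDerivAt.add
      · exact PhiAux.hasDerivAt_psiVec_zero A s (f τn)
      · apply HasDerivAt.fun_sum
        intro j _
        apply HasDerivAt.fun_sum
        intro l _
        exact (PhiAux.hasDerivAt_psiVec A l s (bcoef (j + 1))).const_smul (τn ^ (j - l) / (Nat.factorial (j - l) : ℝ))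
    convert hd using 1
    have hterm : ∀ (lq : ℕ) (w : Fin N → ℝ),
        (PhiAux.psiM A lq s).mulVec w
          = (s ^ lq / (Nat.factorial lq : ℝ)) • w
            + A.mulVec ((PhiAux.psiM A (lq + 1) s).mulVec w) := by
      intro lq w
      rw [PhiAux.psiM_succ A lq s, Matrix.add_mulVec, Matrix.smul_mulVec,
        Matrix.one_mulVec, ← Matrix.mulVec_mulVec]
    calc v s (g s)
        = A.mulVec ((PhiAux.psiM A 0 s).mulVec (f τn))
          + (∑ j ∈ Finset.range p, ∑ l ∈ Finset.range (j + 1),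
              (τn ^ (j - l) / (Nat.factorial (j - l) : ℝ)) •
                A.mulVec ((PhiAux.psiM A (l + 1) s).mulVec (bcoef (j + 1)))
            + ∑ j ∈ Finset.range p,
                ((τn + s) ^ j / (Nat.factorial j : ℝ)) • bcoef (j + 1)) := by
          simp only [hv, hg, Matrix.mulVec_add, mulVec_sum, Matrix.mulVec_smul, hb]
          abel
      _ = A.mulVec ((PhiAux.psiM A 0 s).mulVec (f τn))
          + ∑ j ∈ Finset.range p, ∑ l ∈ Finset.range (j + 1),
              (τn ^ (j - l) / (Nat.factorial (j - l) : ℝ)) •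
                (PhiAux.psiM A l s).mulVec (bcoef (j + 1)) := by
          congr 1
          rw [← Finset.sum_add_distrib]
          apply Finset.sum_congr rfl
          intro j _
          have hbin := PhiAux.binom_sum τn s j
          calc (∑ l ∈ Finset.range (j + 1),
                (τn ^ (j - l) / (Nat.factorial (j - l) : ℝ)) •
                  A.mulVec ((PhiAux.psiM A (l + 1) s).mulVec (bcoef (j + 1))))
              + ((τn + s) ^ j / (Nat.factorial j : ℝ)) • bcoef (j + 1)
              = (∑ l ∈ Finset.range (j + 1),
                  (τn ^ (j - l) / (Nat.factorial (j - l) : ℝ)) •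
                    A.mulVec ((PhiAux.psiM A (l + 1) s).mulVec (bcoef (j + 1))))
                + ∑ l ∈ Finset.range (j + 1),
                    (τn ^ (j - l) / (Nat.factorial (j - l) : ℝ) * (s ^ l / (Nat.factorial l : ℝ))) •
                      bcoef (j + 1) := by
                rw [← Finset.sum_smul, hbin]
            _ = _ := by
                rw [← Finset.sum_add_distrib]
                apply Finset.sum_congr rfl
                intro l _
                rw [hterm l (bcoef (j + 1)), smul_add, ← smul_smul]
                abel
    done
  set F : ℝ → Fin N → ℝ := fun s => f (τn + s) with hF
  have hFd : ∀ s, HasDerivAt F (v s (F s)) s := by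
    intro s
    have h1 : HasDerivAt (fun u : ℝ => τn + u) 1 s := (hasDerivAt_id s).const_add τn
    have h2 := (hf (τn + s)).scomp s h1
    simpa [Function.comp_def, hF, hv] using h2
  have h0 : F 0 = g 0 := by
    simp [hF, hg, PhiAux.psiM_zero_at_zero, PhiAux.psiM_succ_at_zero, Matrix.one_mulVec,
      Matrix.zero_mulVec]
  have heq : Set.EqOn F g (Set.Icc 0 Δτ) :=
    ODE_solution_unique hlip
      (fun s _ => (hFd s).continuousAt.continuousWithinAt)
      (fun s _ => (hFd s).hasDerivWithinAt)
      (fun s _ => (hgd s).continuousAt.continuousWithinAt)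
      (fun s _ => (hgd s).hasDerivWithinAt)
      h0
  have hfg : f (τn + Δτ) = g Δτ := heq ⟨hΔτ.le, le_refl Δτ⟩
  rw [hfg]
  simp only [hg]
  congr 1
  · rw [psiM_eq_phiMat, pow_zero, one_smul]
  · apply Finset.sum_congr rfl
    intro j _
    apply Finset.sum_congr rfl
    intro l _
    rw [psiM_eq_phiMat, Matrix.smul_mulVec, smul_smul]
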